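/- Let V be a finite nonempty set and let π, η : V → ℝ be probability vectors with π strictly positive. For k ∈ ℕ, let μ_{k,π} and μ_{k,η} denote the Multinomial distributions with k trials and success probabilities π, η respectively, viewed as measures on configurations ξ : V → ℕ with total sum k. Then the chi-squared distance satisfies ∑_ξ μ_{k,π}(ξ) * ((μ_{k,η}(ξ)/μ_{k,π}(ξ))^2 - 1) = (1 + ∑_{x∈V} π(x) * (η(x)/π(x) - 1)^2)^k - 1. -/

import Mathlib

open Finset

/-- Multinomial distribution with `k` trials and success probabilities `p`,
viewed on the configuration space of `ξ : V → ℕ` with total sum `k`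
(each coordinate is at most `k`, so we encode it with `Fin (k+1)`). -/
noncomputable def multinomialPMF {V : Type*} [Fintype V] [DecidableEq V] (k : ℕ) (p : V → ℝ)
    (ξ : {ξ : V → Fin (k + 1) // ∑ x, (ξ x : ℕ) = k}) : ℝ :=
  (Nat.factorial k : ℝ) * ∏ x, p x ^ (ξ.1 x : ℕ) / (Nat.factorial (ξ.1 x) : ℝ)

/-- Key generating-function identity: summing the multinomial weights of `q` over all
configurations of total size `k` gives `(∑ q)^k`. -/
lemma multinomialPMF_sum {V : Type*} [Fintype V] [DecidableEq V] (k : ℕ) (q : V → ℝ) :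
    ∑ ξ : {ξ : V → Fin (k + 1) // ∑ x, (ξ x : ℕ) = k}, multinomialPMF k q ξ
      = (∑ x, q x) ^ k := by
  rw [Finset.sum_pow_eq_sum_piAntidiag Finset.univ q k]
  rw [← Finset.sum_coe_sort (Finset.piAntidiag Finset.univ k)]
  refine Finset.sum_nbij' (i := fun ξ : {ξ : V → Fin (k + 1) // ∑ x, (ξ x : ℕ) = k} =>
      (⟨fun x => (ξ.1 x : ℕ), by
        simpa [Finset.mem_piAntidiag] using ξ.2⟩ : (Finset.piAntidiag (Finset.univ : Finset V) k)))
    (j := fun f => (⟨fun x => ⟨f.1 x, by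
      have hf := (Finset.mem_piAntidiag.mp f.2).1
      have hle : f.1 x ≤ k :=
        le_trans (Finset.single_le_sum (fun i _ => Nat.zero_le (f.1 i)) (Finset.mem_univ x))
          (le_of_eq hf)
      omega⟩, by
      simpa using (Finset.mem_piAntidiag.mp f.2).1⟩ :
        {ξ : V → Fin (k + 1) // ∑ x, (ξ x : ℕ) = k})) ?_ ?_ ?_ ?_ ?_
  · intros; exact Finset.mem_univ _
  · intros; exact Finset.mem_univ _
  · intro ξ _; ext x; simp
  · intro f _; ext x; simp
  · intro ξ _
    have hsum : ∑ x, (ξ.1 x : ℕ) = k := ξ.2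
    have hspec := Nat.multinomial_spec (Finset.univ : Finset V) (fun x => (ξ.1 x : ℕ))
    rw [hsum] at hspec
    have hprodpos : (0:ℝ) < ∏ x, (Nat.factorial (ξ.1 x) : ℝ) := by
      positivity
    have hcast : (∏ x, (Nat.factorial (ξ.1 x) : ℝ)) *
        (Nat.multinomial Finset.univ (fun x => (ξ.1 x : ℕ)) : ℝ) = (Nat.factorial k : ℝ) := by
      exact_mod_cast congrArg (Nat.cast : ℕ → ℝ) hspec
    simp only [multinomialPMF]
    rw [Finset.prod_div_distrib, ← hcast]
    field_simp
theorem chi_squared_multinomial {V : Type*} [Fintype V] [DecidableEq V] [Nonempty V]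
    (k : ℕ) (π η : V → ℝ)
    (hπpos : ∀ x, 0 < π x) (hπ1 : ∑ x, π x = 1)
    (hηpos : ∀ x, 0 ≤ η x) (hη1 : ∑ x, η x = 1) :
    ∑ ξ : {ξ : V → Fin (k + 1) // ∑ x, (ξ x : ℕ) = k},
        multinomialPMF k π ξ * ((multinomialPMF k η ξ / multinomialPMF k π ξ) ^ 2 - 1)
      = (1 + ∑ x, π x * (η x / π x - 1) ^ 2) ^ k - 1 := by
  have hq : (1 + ∑ x, π x * (η x / π x - 1) ^ 2) = ∑ x, (η x) ^ 2 / π x := by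
    have : ∀ x, π x * (η x / π x - 1) ^ 2 = (η x) ^ 2 / π x - 2 * η x + π x := by
      intro x
      have hx := (hπpos x).ne'
      field_simp
      ring
    simp only [this, Finset.sum_add_distrib, Finset.sum_sub_distrib, hπ1, ← Finset.mul_sum, hη1]
    ring
  have hterm : ∀ ξ : {ξ : V → Fin (k + 1) // ∑ x, (ξ x : ℕ) = k},
      multinomialPMF k π ξ * ((multinomialPMF k η ξ / multinomialPMF k π ξ) ^ 2 - 1)
        = multinomialPMF k (fun x => (η x) ^ 2 / π x) ξ - multinomialPMF k π ξ := by
    intro ξ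
    have hA : 0 < multinomialPMF k π ξ := by
      unfold multinomialPMF
      refine mul_pos (by exact_mod_cast Nat.factorial_pos k) (Finset.prod_pos ?_)
      intro x _
      exact div_pos (pow_pos (hπpos x) _) (by exact_mod_cast Nat.factorial_pos _)
    have hCA : multinomialPMF k (fun x => (η x) ^ 2 / π x) ξ * multinomialPMF k π ξ
        = (multinomialPMF k η ξ) ^ 2 := by
      unfold multinomialPMF
      have h : ∀ x ∈ (Finset.univ : Finset V),
          (η x ^ 2 / π x) ^ (ξ.1 x : ℕ) / (Nat.factorial (ξ.1 x) : ℝ) *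
            (π x ^ (ξ.1 x : ℕ) / (Nat.factorial (ξ.1 x) : ℝ))
          = (η x ^ (ξ.1 x : ℕ) / (Nat.factorial (ξ.1 x) : ℝ)) ^ 2 := by
        intro x _
        have hx := (hπpos x).ne'
        have hfx : ((Nat.factorial (ξ.1 x) : ℝ)) ≠ 0 := by
          exact_mod_cast (Nat.factorial_pos _).ne'
        field_simp
        rw [div_pow, div_mul_cancel₀ _ (pow_ne_zero _ hx)]
        ring
      rw [mul_mul_mul_comm, ← Finset.prod_mul_distrib, Finset.prod_congr rfl h,
        Finset.prod_pow]
      ring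
    have hBA : multinomialPMF k π ξ * (multinomialPMF k η ξ / multinomialPMF k π ξ) ^ 2
        = multinomialPMF k (fun x => (η x) ^ 2 / π x) ξ := by
      rw [div_pow, ← hCA]
      field_simp
    rw [mul_sub, mul_one, hBA]
  rw [Finset.sum_congr rfl (fun ξ _ => hterm ξ), Finset.sum_sub_distrib,
    multinomialPMF_sum, multinomialPMF_sum, hπ1, one_pow, hq]
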